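/- Let $2<p<4$, $a>0$, and let $D, E, G>0$ with $a< 2(p-2)(4-p)^{(4-p)/(p-2)}\left(\frac{G}{pD^{p/2}}\right)^{2/(p-2)}$, where $D=\int_\Omega|\nabla\varphi|^2$, $E=\int_\Omega f\varphi^2\geq 0$, $G=\int_\Omega g|\varphi|^p$. Set $t_a=\left(\frac{2(p-2)G}{apD^2}\right)^{1/(4-p)}$. Then for any $\lambda>0$, $\frac{t_a^2}{2}D + \frac{a}{4}D^2t_a^4 - \frac{G}{p}t_a^p - \frac{\lambda}{2}E t_a^2 < 0$, i.e. $J_{a,\lambda}(t_a\varphi)<0$. -/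

import Mathlib

/-- The special point `t_a = (2(p-2)G/(apD²))^{1/(4-p)}`. -/
noncomputable def tA8 (p a D G : ℝ) : ℝ :=
  (2 * (p - 2) * G / (a * p * D ^ 2)) ^ ((1 : ℝ) / (4 - p))

set_option maxHeartbeats 1000000 in
set_option maxRecDepth 8000 in
/-- Let `2 < p < 4`, `a > 0`, `D, G > 0`, `E ≥ 0` with
`a < 2(p-2)(4-p)^{(4-p)/(p-2)}(G/(pD^{p/2}))^{2/(p-2)}`. Then for any `λ > 0`,
`(t_a²/2)D + (a/4)D²t_a⁴ - (G/p)t_a^p - (λ/2)E·t_a² < 0`. -/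
theorem stmt_8 (p a D E G lam : ℝ) (hp2 : 2 < p) (hp4 : p < 4) (ha : 0 < a) (hD : 0 < D)
    (hE : 0 ≤ E) (hG : 0 < G) (hlam : 0 < lam)
    (hbound : a < 2 * (p - 2) * (4 - p) ^ ((4 - p) / (p - 2)) *
        (G / (p * D ^ (p / 2))) ^ (2 / (p - 2))) :
    tA8 p a D G ^ 2 / 2 * D + a / 4 * D ^ 2 * tA8 p a D G ^ 4 - G / p * tA8 p a D G ^ p -
      lam / 2 * E * tA8 p a D G ^ 2 < 0 := by
  have hs : (0:ℝ) < p - 2 := by linarith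
  have hr : (0:ℝ) < 4 - p := by linarith
  have hp : (0:ℝ) < p := by linarith
  set q : ℝ := (4 - p) / (p - 2) with hq
  have hqpos : 0 < q := div_pos hr hs
  have hc : (0:ℝ) < 2 * (p - 2) * G / (a * p * D ^ 2) := by positivity
  set c := 2 * (p - 2) * G / (a * p * D ^ 2) with hcdef
  have ht : 0 < tA8 p a D G := Real.rpow_pos_of_pos hc _
  set t := tA8 p a D G with htdef
  have htr : t ^ (4 - p) = c := by
    rw [htdef, tA8, ← hcdef, ← Real.rpow_mul hc.le, one_div_mul_cancel hr.ne', Real.rpow_one]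
  have h4 : t ^ (4:ℕ) = t ^ p * c := by
    rw [← htr, ← Real.rpow_natCast t 4, ← Real.rpow_add ht]
    norm_num
  have h2 : t ^ p = t ^ (2:ℕ) * t ^ (p - 2) := by
    rw [← Real.rpow_natCast t 2, ← Real.rpow_add ht]
    norm_num
  have htp2 : t ^ (p - 2) = c ^ ((p - 2) / (4 - p)) := by
    rw [htdef, tA8, ← hcdef, ← Real.rpow_mul hc.le]
    congr 1
    field_simp
  clear_value t
  clear_value c
  set M : ℝ := p * D / ((4 - p) * G) with hM
  have hMpos : 0 < M := by positivity
  have hMq : M ^ q = p ^ q * D ^ q / ((4 - p) ^ q * G ^ q) := by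
    rw [hM, Real.div_rpow (by positivity) (by positivity),
      Real.mul_rpow hp.le hD.le, Real.mul_rpow hr.le hG.le]
  clear_value M
  have hKey : M ^ q < c := by
    have hB : 2 * (p - 2) * (4 - p) ^ q * (G / (p * D ^ (p / 2))) ^ (2 / (p - 2))
        * (p * D ^ 2 * M ^ q) = 2 * (p - 2) * G := by
      have hK : (G / (p * D ^ (p / 2))) ^ (2 / (p - 2))
          = G ^ (2 / (p - 2)) / (p ^ (2 / (p - 2)) * D ^ (p / (p - 2))) := by
        rw [Real.div_rpow hG.le (by positivity), Real.mul_rpow hp.le (by positivity),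
          ← Real.rpow_mul hD.le]
        congr 3
        field_simp
      rw [hK, hMq]
      have e1 : G ^ ((2:ℝ) / (p - 2)) = G * G ^ q := by
        rw [hq, show (2:ℝ)/(p-2) = 1 + (4-p)/(p-2) by field_simp; norm_num,
          Real.rpow_add hG, Real.rpow_one]
      have e2 : p ^ ((2:ℝ) / (p - 2)) = p * p ^ q := by
        rw [hq, show (2:ℝ)/(p-2) = 1 + (4-p)/(p-2) by field_simp; norm_num,
          Real.rpow_add hp, Real.rpow_one]
      have e3 : D ^ (p / (p - 2)) = D ^ (2:ℕ) * D ^ q := by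
        rw [hq, show p/(p-2) = 2 + (4-p)/(p-2) by field_simp; ring,
          Real.rpow_add hD, show ((2:ℝ)) = ((2:ℕ):ℝ) by norm_num, Real.rpow_natCast]
      rw [e1, e2, e3]
      have k1 : (0:ℝ) < (4 - p) ^ q := Real.rpow_pos_of_pos hr q
      have k2 : (0:ℝ) < G ^ q := Real.rpow_pos_of_pos hG q
      have k3 : (0:ℝ) < p ^ q := Real.rpow_pos_of_pos hp q
      have k4 : (0:ℝ) < D ^ q := Real.rpow_pos_of_pos hD q
      field_simp
    have hprod : a * (p * D ^ 2 * M ^ q) < 2 * (p - 2) * G := by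
      calc a * (p * D ^ 2 * M ^ q)
          < 2 * (p - 2) * (4 - p) ^ q * (G / (p * D ^ (p / 2))) ^ (2 / (p - 2))
            * (p * D ^ 2 * M ^ q) :=
            mul_lt_mul_of_pos_right hbound (by positivity)
        _ = 2 * (p - 2) * G := hB
    rw [hcdef, lt_div_iff₀ (by positivity)]
    nlinarith [hprod]
  have hMlt : M < t ^ (p - 2) := by
    have e : (M ^ q) ^ ((p - 2) / (4 - p)) = M := by
      rw [← Real.rpow_mul hMpos.le, hq]
      rw [show (4-p)/(p-2) * ((p-2)/(4-p)) = 1 by field_simp, Real.rpow_one]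
    calc M = (M ^ q) ^ ((p - 2) / (4 - p)) := e.symm
      _ < c ^ ((p - 2) / (4 - p)) :=
        Real.rpow_lt_rpow (by positivity) hKey (by positivity)
      _ = t ^ (p - 2) := htp2.symm
  have key : p * D < (4 - p) * G * t ^ (p - 2) := by
    rw [hM, div_lt_iff₀ (by positivity)] at hMlt
    linarith
  rw [h4, h2]
  have hsub : a / 4 * D ^ 2 * (t ^ (2:ℕ) * t ^ (p - 2) * c) =
      (p - 2) * G / (2 * p) * (t ^ (2:ℕ) * t ^ (p - 2)) := by
    rw [hcdef]; field_simp; ring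
  rw [hsub]
  have hTpos : 0 < t ^ (2:ℕ) := by positivity
  have hXpos : 0 < t ^ (p - 2) := Real.rpow_pos_of_pos ht _
  have hneg : p * (t ^ (2:ℕ) / 2 * D + (p - 2) * G / (2 * p) * (t ^ (2:ℕ) * t ^ (p - 2))
      - G / p * (t ^ (2:ℕ) * t ^ (p - 2)) - lam / 2 * E * t ^ (2:ℕ)) < 0 := by
    have hexp : p * (t ^ (2:ℕ) / 2 * D + (p - 2) * G / (2 * p) * (t ^ (2:ℕ) * t ^ (p - 2))
        - G / p * (t ^ (2:ℕ) * t ^ (p - 2)) - lam / 2 * E * t ^ (2:ℕ))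
        = t ^ (2:ℕ) / 2 * (p * D) - (4 - p) / 2 * G * (t ^ (2:ℕ) * t ^ (p - 2))
          - p * (lam / 2 * E * t ^ (2:ℕ)) := by
      field_simp; ring
    rw [hexp]
    have h7 : t ^ (2:ℕ) / 2 * (p * D) < t ^ (2:ℕ) / 2 * ((4 - p) * G * t ^ (p - 2)) :=
      mul_lt_mul_of_pos_left key (by positivity)
    nlinarith [mul_nonneg (mul_nonneg hlam.le hE) hTpos.le]
  nlinarith [hneg]
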